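/- For the SubsetSum instance, every diff from β_S to β_T under the family F(R,+) has cost at least n; in particular every best diff has cost at least n. -/

import Mathlib

open scoped Classical

/-- An operation of the family `F(R,+)`: reals `a ≤ z` and an increment `b`, with condition
`A ∈ [a, z]` and modifier `B ← B + b`. -/
structure OpRangeAdd where
  a : ℝ
  z : ℝ
  hle : a ≤ z
  b : ℝ

/-- The condition of an operation of `F(R,+)`, evaluated on an `A`-value `v`. -/
def OpRangeAdd.cond (f : OpRangeAdd) (v : ℤ) : Prop :=
  f.a ≤ (v : ℝ) ∧ (v : ℝ) ≤ f.z

/-- Applying an operation of `F(R,+)`: every key whose `A`-value lies in `[a, z]` gets its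
`B`-value incremented by `b`; other keys are unchanged. -/
noncomputable def OpRangeAdd.apply {K : Type*} (α : K → ℤ) (f : OpRangeAdd) (β : K → ℝ) :
    K → ℝ :=
  fun k => if f.cond (α k) then β k + f.b else β k

/-- Successive application of a finite sequence of operations of `F(R,+)`. -/
noncomputable def applyOpsRangeAdd {K : Type*} (α : K → ℤ) (L : List OpRangeAdd)
    (β : K → ℝ) : K → ℝ :=
  L.foldl (fun β' f => f.apply α β') β

/-- `L` is a diff from `βS` to `βT` under `F(R,+)`. -/
def IsDiffRangeAdd {K : Type*} (α : K → ℤ) (L : List OpRangeAdd) (βS βT : K → ℝ) : Prop :=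
  applyOpsRangeAdd α L βS = βT

/-- `L` is a best diff under `F(R,+)`: a diff of minimum cost (number of operations). -/
def IsBestDiffRangeAdd {K : Type*} (α : K → ℤ) (L : List OpRangeAdd) (βS βT : K → ℝ) :
    Prop :=
  IsDiffRangeAdd α L βS βT ∧
    ∀ L' : List OpRangeAdd, IsDiffRangeAdd α L' βS βT → L.length ≤ L'.length

/-- `A`-values of the SubsetSum instance: `α k = k` on the key set `K = {0,…,n}`. -/
def ssAlpha (n : ℕ) : Fin (n + 1) → ℤ := fun k => ((k : ℕ) : ℤ)

/-- Source `B`-values of the SubsetSum instance: identically `0`. -/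
def ssBS (n : ℕ) : Fin (n + 1) → ℝ := fun _ => 0

/-- Target `B`-values of the SubsetSum instance: `β_T k = b_k = ∑_{ℓ=0}^{k} s ℓ`. -/
noncomputable def ssBT (n : ℕ) (s : ℕ → ℤ) : Fin (n + 1) → ℝ :=
  fun k => ((∑ ℓ ∈ Finset.range ((k : ℕ) + 1), s ℓ : ℤ) : ℝ)

/-- For the SubsetSum instance, every diff from `β_S` to `β_T` under `F(R,+)` has cost at
least `n`; in particular every best diff has cost at least `n`. -/
lemma applyOps_eq {K : Type*} (α : K → ℤ) (L : List OpRangeAdd) (β : K → ℝ) (k : K) :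
    applyOpsRangeAdd α L β k = β k + ∑ i : Fin L.length,
      (if (L.get i).cond (α k) then (L.get i).b else 0) := by
  induction L generalizing β with
  | nil => simp [applyOpsRangeAdd]
  | cons f L ih =>
    simp only [applyOpsRangeAdd, List.foldl_cons] at *
    rw [ih]
    simp only [List.length_cons]
    rw [Fin.sum_univ_succ]
    simp only [List.get_eq_getElem, Fin.val_zero, Fin.val_succ, List.getElem_cons_zero, List.getElem_cons_succ, OpRangeAdd.apply]
    split <;> simp [*] <;> ring

lemma pos_contrib_cases (f : OpRangeAdd) (k : ℕ)
    (h : 0 < (if f.cond (k : ℤ) then f.b else 0) -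
        (if f.cond ((k : ℤ) - 1) then f.b else 0)) :
    (0 < f.b ∧ (k : ℝ) - 1 < f.a ∧ f.a ≤ (k : ℝ)) ∨
    (f.b < 0 ∧ (k : ℝ) - 1 ≤ f.z ∧ f.z < (k : ℝ)) := by
  simp only [OpRangeAdd.cond] at h
  push_cast at h
  by_cases c1 : f.a ≤ (k : ℝ) ∧ (k : ℝ) ≤ f.z <;>
    by_cases c2 : f.a ≤ (k : ℝ) - 1 ∧ (k : ℝ) - 1 ≤ f.z
  · rw [if_pos c1, if_pos c2] at h; linarith
  · rw [if_pos c1, if_neg c2] at h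
    left
    obtain ⟨h1, h2⟩ := c1
    refine ⟨by linarith, ?_, h1⟩
    by_contra hcon
    exact c2 ⟨by linarith, by linarith⟩
  · rw [if_neg c1, if_pos c2] at h
    right
    obtain ⟨h1, h2⟩ := c2
    refine ⟨by linarith, h2, ?_⟩
    by_contra hcon
    exact c1 ⟨by linarith, by linarith⟩
  · rw [if_neg c1, if_neg c2] at h; linarith

lemma pos_contrib_unique (f : OpRangeAdd) (k k' : ℕ)
    (h1 : 0 < (if f.cond (k : ℤ) then f.b else 0) - (if f.cond ((k : ℤ) - 1) then f.b else 0))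
    (h2 : 0 < (if f.cond (k' : ℤ) then f.b else 0) - (if f.cond ((k' : ℤ) - 1) then f.b else 0)) :
    k = k' := by
  rcases pos_contrib_cases f k h1 with ⟨hb, ha1, ha2⟩ | ⟨hb, hz1, hz2⟩ <;>
    rcases pos_contrib_cases f k' h2 with ⟨hb', ha1', ha2'⟩ | ⟨hb', hz1', hz2'⟩
  · have e1 : (k : ℝ) < (k' : ℝ) + 1 := by linarith
    have e2 : (k' : ℝ) < (k : ℝ) + 1 := by linarith
    have e1' : k < k' + 1 := by exact_mod_cast e1
    have e2' : k' < k + 1 := by exact_mod_cast e2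
    omega
  · linarith
  · linarith
  · have e1 : (k : ℝ) < (k' : ℝ) + 1 := by linarith
    have e2 : (k' : ℝ) < (k : ℝ) + 1 := by linarith
    have e1' : k < k' + 1 := by exact_mod_cast e1
    have e2' : k' < k + 1 := by exact_mod_cast e2
    omega

theorem subsetSum_range_diff_cost_lower_bound (n : ℕ) (s : ℕ → ℤ) (t : ℤ)
    (ht : 0 < t) (hs0 : s 0 = -t) (hpos : ∀ i, 1 ≤ i → i ≤ n → 0 < s i) :
    (∀ L : List OpRangeAdd,
        IsDiffRangeAdd (ssAlpha n) L (ssBS n) (ssBT n s) → n ≤ L.length) ∧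
      ∀ L : List OpRangeAdd,
        IsBestDiffRangeAdd (ssAlpha n) L (ssBS n) (ssBT n s) → n ≤ L.length := by
  have main : ∀ L : List OpRangeAdd,
      IsDiffRangeAdd (ssAlpha n) L (ssBS n) (ssBT n s) → n ≤ L.length := by
    intro L hL
    have key : ∀ k : ℕ, 1 ≤ k → k ≤ n →
        (∑ i : Fin L.length, ((if (L.get i).cond (k : ℤ) then (L.get i).b else 0)
          - (if (L.get i).cond ((k : ℤ) - 1) then (L.get i).b else 0))) = (s k : ℝ) := by
      intro k hk1 hkn
      have hk : k < n + 1 := by omega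
      have hk' : k - 1 < n + 1 := by omega
      have e1 := congrFun hL (⟨k, hk⟩ : Fin (n + 1))
      have e2 := congrFun hL (⟨k - 1, hk'⟩ : Fin (n + 1))
      unfold IsDiffRangeAdd at *
      rw [applyOps_eq] at e1 e2
      simp only [ssBS, ssBT, ssAlpha, zero_add] at e1 e2
      have hcast : ((k - 1 : ℕ) : ℤ) = (k : ℤ) - 1 := by
        push_cast [hk1]; ring
      simp only [hcast] at e2
      have hr : (k - 1) + 1 = k := by omega
      rw [hr] at e2
      rw [Finset.sum_sub_distrib]; erw [e1, e2]
      rw [Finset.sum_range_succ]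
      push_cast
      ring
    have exi : ∀ k : ℕ, k ∈ Finset.Icc 1 n → ∃ i : Fin L.length,
        0 < (if (L.get i).cond (k : ℤ) then (L.get i).b else 0)
          - (if (L.get i).cond ((k : ℤ) - 1) then (L.get i).b else 0) := by
      intro k hk
      rw [Finset.mem_Icc] at hk
      by_contra hcon
      push_neg at hcon
      have hle := Finset.sum_nonpos (s := (Finset.univ : Finset (Fin L.length)))
        (fun i _ => hcon i)
      rw [key k hk.1 hk.2] at hle
      have hsk : 0 < s k := hpos k hk.1 hk.2
      have : (0 : ℝ) < (s k : ℝ) := by exact_mod_cast hsk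
      linarith
    classical
    let g : ℕ → ℕ := fun k =>
      if h : k ∈ Finset.Icc 1 n then ((exi k h).choose : ℕ) else 0
    have hmem : ∀ k ∈ Finset.Icc 1 n, g k ∈ Finset.range L.length := by
      intro k hk
      simp only [g, dif_pos hk, Finset.mem_range]
      exact (exi k hk).choose.isLt
    have hinj : Set.InjOn g (Finset.Icc 1 n) := by
      intro k hk k' hk' heq
      simp only [Finset.coe_Icc, Set.mem_Icc] at hk hk'
      have hk'' : k ∈ Finset.Icc 1 n := Finset.mem_Icc.2 hk
      have hk''' : k' ∈ Finset.Icc 1 n := Finset.mem_Icc.2 hk'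
      simp only [g, dif_pos hk'', dif_pos hk'''] at heq
      have hi : (exi k hk'').choose = (exi k' hk''').choose := Fin.ext heq
      have p1 := (exi k hk'').choose_spec
      have p2 := (exi k' hk''').choose_spec
      rw [hi] at p1
      exact pos_contrib_unique (L.get (exi k' hk''').choose) k k' p1 p2
    have := Finset.card_le_card_of_injOn g hmem hinj
    simpa using this
  exact ⟨main, fun L hL => main L hL.1⟩
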